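/- For every compact set K ⊂ ℂ, d_X is a metric on X(K): it takes finite nonnegative values, is symmetric, satisfies the triangle inequality d_X(F, H) ≤ d_X(F, G) + d_X(G, H) for all F, G, H ∈ X(K), and d_X(F, G) = 0 implies F = G. -/
import Mathlib


noncomputable section

open Set Filter Metric MeasureTheory
open scoped Classical

/-- A loop: a continuous `1`-periodic map `ℝ → ℂ`, viewed as a continuous map from the
circle `S¹ = ℝ/ℤ` to the complex plane. -/
structure Loop where
  toFun : ℝ → ℂ
  continuous_toFun : Continuous toFun
  periodic_toFun : Function.Periodic toFun 1

/-- Lifts of orientation-preserving homeomorphisms of the circle `ℝ/ℤ`: continuous strictly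
increasing maps of `ℝ` commuting with translation by `1`. -/
def CircleMaps : Set (ℝ → ℝ) :=
  {φ | Continuous φ ∧ StrictMono φ ∧ ∀ t, φ (t + 1) = φ t + 1}

/-- The supremum distance between loops, up to orientation-preserving reparametrization:
`d_Γ(γ, γ') = inf_{φ,ψ} sup_t |γ(φ t) - γ'(ψ t)|`. -/
def dGamma (γ γ' : Loop) : ℝ :=
  sInf {r : ℝ | 0 ≤ r ∧ ∃ φ ∈ CircleMaps, ∃ ψ ∈ CircleMaps,
    ∀ t : ℝ, dist (γ.toFun (φ t)) (γ'.toFun (ψ t)) ≤ r}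

/-- Loops at `d_Γ`-distance zero are identified. -/
def loopRel (γ γ' : Loop) : Prop := dGamma γ γ' = 0

/-- The space `Γ₀` of loop classes: loops modulo the relation `d_Γ = 0`. -/
def LoopClass : Type := Quot loopRel

/-- The class of a loop in `Γ₀`. -/
def Loop.cls (γ : Loop) : LoopClass := Quot.mk loopRel γ

namespace LoopClass

/-- The image of a loop class (all representatives have the same image). -/
def image (c : LoopClass) : Set ℂ := ⋃ γ ∈ {γ : Loop | γ.cls = c}, Set.range γ.toFun

/-- The diameter of a loop class. -/
def diam (c : LoopClass) : ℝ := Metric.diam c.image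

/-- A loop class is trivial if its image is a single point. -/
def IsTrivial (c : LoopClass) : Prop := ∃ z : ℂ, c.image = {z}

/-- A loop class is simple if it has an injective representative. -/
def IsSimple (c : LoopClass) : Prop :=
  ∃ γ : Loop, γ.cls = c ∧ ∀ s t : ℝ, s ∈ Set.Ico (0:ℝ) 1 → t ∈ Set.Ico (0:ℝ) 1 →
    γ.toFun s = γ.toFun t → s = t

/-- The induced distance `d_Γ` on loop classes. -/
def dist (c c' : LoopClass) : ℝ :=
  sInf {r : ℝ | ∃ γ γ' : Loop, γ.cls = c ∧ γ'.cls = c' ∧ dGamma γ γ' ≤ r}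

end LoopClass

/-- The space `X(K)` of at most countable, locally finite collections of nontrivial loop
classes with images contained in `K`. -/
def LoopCollections (K : Set ℂ) : Set (Set LoopClass) :=
  {F | F.Countable ∧ (∀ c ∈ F, ¬ c.IsTrivial ∧ c.image ⊆ K) ∧
    ∀ ε : ℝ, 0 < ε → {c ∈ F | ε < c.diam}.Finite}

/-- A partial matching between the collections `F` and `G`: a set of pairs in which every
element of `F` and every element of `G` occurs at most once. -/
def IsMatching (F G : Set LoopClass) (π : Set (LoopClass × LoopClass)) : Prop :=
  (∀ p ∈ π, p.1 ∈ F ∧ p.2 ∈ G) ∧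
  (∀ p ∈ π, ∀ q ∈ π, p.1 = q.1 → p = q) ∧
  (∀ p ∈ π, ∀ q ∈ π, p.2 = q.2 → p = q)

/-- The elements of `F` and `G` not matched by `π`. -/
def unmatched (F G : Set LoopClass) (π : Set (LoopClass × LoopClass)) : Set LoopClass :=
  {c ∈ F | ∀ p ∈ π, p.1 ≠ c} ∪ {c ∈ G | ∀ p ∈ π, p.2 ≠ c}

/-- The distance `d_X` between loop collections: the infimum over partial matchings of the
maximum of the matched `d_Γ`-distances and of half the diameters of unmatched loops. -/
def dX (F G : Set LoopClass) : ℝ :=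
  sInf {r : ℝ | 0 ≤ r ∧ ∃ π : Set (LoopClass × LoopClass), IsMatching F G π ∧
    (∀ p ∈ π, LoopClass.dist p.1 p.2 ≤ r) ∧
    ∀ c ∈ unmatched F G π, c.diam / 2 ≤ r}

/-! ### Auxiliary lemmas -/

section Aux

lemma Loop.sub_int (γ : Loop) (t : ℝ) (n : ℤ) : γ.toFun (t - n) = γ.toFun t := by
  simpa using γ.periodic_toFun.sub_int_mul_eq (x := t) n

lemma Loop.range_eq_image (γ : Loop) :
    Set.range γ.toFun = γ.toFun '' Set.Icc 0 1 := by
  apply Set.Subset.antisymm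
  · rintro _ ⟨t, rfl⟩
    refine ⟨Int.fract t, ⟨Int.fract_nonneg t, (Int.fract_lt_one t).le⟩, ?_⟩
    exact γ.sub_int t ⌊t⌋
  · exact Set.image_subset_range _ _

lemma Loop.isCompact_range (γ : Loop) : IsCompact (Set.range γ.toFun) := by
  rw [γ.range_eq_image]; exact isCompact_Icc.image γ.continuous_toFun

lemma Loop.isBounded_range (γ : Loop) : Bornology.IsBounded (Set.range γ.toFun) :=
  γ.isCompact_range.isBounded

lemma id_mem_CircleMaps : (id : ℝ → ℝ) ∈ CircleMaps :=
  ⟨continuous_id, strictMono_id, fun _ => rfl⟩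

lemma CircleMaps.comp {φ ψ : ℝ → ℝ} (hφ : φ ∈ CircleMaps) (hψ : ψ ∈ CircleMaps) :
    φ ∘ ψ ∈ CircleMaps :=
  ⟨hφ.1.comp hψ.1, hφ.2.1.comp hψ.2.1, fun t => by
    simp only [Function.comp_apply, hψ.2.2 t, hφ.2.2]⟩

lemma CircleMaps.add_nat {φ : ℝ → ℝ} (hφ : φ ∈ CircleMaps) (t : ℝ) (n : ℕ) :
    φ (t + n) = φ t + n := by
  induction n with
  | zero => simp
  | succ n ih =>
    have h1 : (t + ((n : ℝ) + 1)) = (t + n) + 1 := by ring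
    push_cast
    rw [h1, hφ.2.2, ih]
    ring

lemma CircleMaps.sub_nat {φ : ℝ → ℝ} (hφ : φ ∈ CircleMaps) (t : ℝ) (n : ℕ) :
    φ (t - n) = φ t - n := by
  have h := CircleMaps.add_nat hφ (t - n) n
  rw [sub_add_cancel] at h
  linarith

lemma CircleMaps.surjective {φ : ℝ → ℝ} (hφ : φ ∈ CircleMaps) : Function.Surjective φ := by
  apply hφ.1.surjective
  · rw [Filter.tendsto_atTop_atTop]
    intro b
    obtain ⟨n, hn⟩ := exists_nat_ge (b - φ 0)
    refine ⟨n, fun a ha => ?_⟩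
    have h1 : φ ((0 : ℝ) + n) = φ 0 + n := CircleMaps.add_nat hφ 0 n
    have h2 : φ ((0 : ℝ) + n) ≤ φ a := hφ.2.1.monotone (by simpa using ha)
    linarith
  · rw [Filter.tendsto_atBot_atBot]
    intro b
    obtain ⟨n, hn⟩ := exists_nat_ge (φ 0 - b)
    refine ⟨-n, fun a ha => ?_⟩
    have h1 : φ ((0 : ℝ) - n) = φ 0 - n := CircleMaps.sub_nat hφ 0 n
    have h2 : φ a ≤ φ ((0 : ℝ) - n) := hφ.2.1.monotone (by simpa using ha)
    linarith

lemma CircleMaps.exists_inv {φ : ℝ → ℝ} (hφ : φ ∈ CircleMaps) :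
    ∃ ψ ∈ CircleMaps, (∀ t, φ (ψ t) = t) ∧ ∀ t, ψ (φ t) = t := by
  have hsurj := CircleMaps.surjective hφ
  let e : ℝ ≃o ℝ := StrictMono.orderIsoOfSurjective φ hφ.2.1 hsurj
  have he : ∀ x, e x = φ x := fun x => rfl
  have hright : ∀ t, φ (e.symm t) = t := fun t => by
    have := e.apply_symm_apply t
    rwa [he] at this
  have hleft : ∀ t, e.symm (φ t) = t := fun t => by
    have := e.symm_apply_apply t
    rwa [he] at this
  refine ⟨e.symm, ⟨e.symm.continuous, e.symm.strictMono, fun t => ?_⟩, hright, hleft⟩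
  apply hφ.2.1.injective
  rw [hright, hφ.2.2, hright]

/-! ### The set defining `dGamma` -/

def dgSet (γ γ' : Loop) : Set ℝ :=
  {r : ℝ | 0 ≤ r ∧ ∃ φ ∈ CircleMaps, ∃ ψ ∈ CircleMaps,
    ∀ t : ℝ, dist (γ.toFun (φ t)) (γ'.toFun (ψ t)) ≤ r}

lemma dGamma_eq_sInf (γ γ' : Loop) : dGamma γ γ' = sInf (dgSet γ γ') := rfl

lemma dgSet_bddBelow (γ γ' : Loop) : BddBelow (dgSet γ γ') :=
  ⟨0, fun _ hx => hx.1⟩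

lemma dgSet_nonempty (γ γ' : Loop) : (dgSet γ γ').Nonempty := by
  obtain ⟨r, hr⟩ := γ.isBounded_range.subset_closedBall 0
  obtain ⟨r', hr'⟩ := γ'.isBounded_range.subset_closedBall 0
  refine ⟨max 0 (r + r'), le_max_left _ _, id, id_mem_CircleMaps, id, id_mem_CircleMaps,
    fun t => ?_⟩
  have h1 : dist (γ.toFun t) 0 ≤ r := by
    simpa [Metric.mem_closedBall] using hr ⟨t, rfl⟩
  have h2 : dist (γ'.toFun t) 0 ≤ r' := by
    simpa [Metric.mem_closedBall] using hr' ⟨t, rfl⟩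
  calc dist (γ.toFun (id t)) (γ'.toFun (id t))
      ≤ dist (γ.toFun t) 0 + dist 0 (γ'.toFun t) := dist_triangle _ _ _
    _ ≤ r + r' := by rw [dist_comm (0 : ℂ)]; exact add_le_add h1 h2
    _ ≤ max 0 (r + r') := le_max_right _ _

lemma dGamma_nonneg (γ γ' : Loop) : 0 ≤ dGamma γ γ' :=
  Real.sInf_nonneg fun _ hx => hx.1

lemma dgSet_comm (γ γ' : Loop) : dgSet γ γ' = dgSet γ' γ := by
  have key : ∀ δ δ' : Loop, dgSet δ δ' ⊆ dgSet δ' δ := by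
    rintro δ δ' r ⟨h0, φ, hφ, ψ, hψ, h⟩
    exact ⟨h0, ψ, hψ, φ, hφ, fun t => by rw [dist_comm]; exact h t⟩
  exact (key γ γ').antisymm (key γ' γ)

lemma dGamma_comm (γ γ' : Loop) : dGamma γ γ' = dGamma γ' γ := by
  rw [dGamma_eq_sInf, dGamma_eq_sInf, dgSet_comm]

lemma dGamma_self (γ : Loop) : dGamma γ γ = 0 := by
  refine le_antisymm ?_ (dGamma_nonneg γ γ)
  exact csInf_le (dgSet_bddBelow γ γ)
    ⟨le_refl 0, id, id_mem_CircleMaps, id, id_mem_CircleMaps, fun t => by simp⟩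

lemma dGamma_triangle (γ₁ γ₂ γ₃ : Loop) :
    dGamma γ₁ γ₃ ≤ dGamma γ₁ γ₂ + dGamma γ₂ γ₃ := by
  have key : ∀ r ∈ dgSet γ₁ γ₂, ∀ s ∈ dgSet γ₂ γ₃, r + s ∈ dgSet γ₁ γ₃ := by
    rintro r ⟨hr0, φ, hφ, ψ, hψ, hr⟩ s ⟨hs0, φ', hφ', ψ', hψ', hs⟩
    obtain ⟨ψi, hψi, hinv1, _⟩ := CircleMaps.exists_inv hψ
    refine ⟨by linarith, φ ∘ (ψi ∘ φ'), CircleMaps.comp hφ (CircleMaps.comp hψi hφ'),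
      ψ', hψ', fun t => ?_⟩
    have h2 : dist (γ₂.toFun (ψ (ψi (φ' t)))) (γ₃.toFun (ψ' t)) ≤ s := by
      rw [hinv1]; exact hs t
    calc dist (γ₁.toFun ((φ ∘ (ψi ∘ φ')) t)) (γ₃.toFun (ψ' t))
        ≤ dist (γ₁.toFun (φ (ψi (φ' t)))) (γ₂.toFun (ψ (ψi (φ' t))))
          + dist (γ₂.toFun (ψ (ψi (φ' t)))) (γ₃.toFun (ψ' t)) := dist_triangle _ _ _
      _ ≤ r + s := add_le_add (hr _) h2
  apply le_of_forall_pos_le_add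
  intro ε hε
  obtain ⟨r, hrS, hr⟩ := exists_lt_of_csInf_lt (dgSet_nonempty γ₁ γ₂)
    (lt_add_of_pos_right (dGamma γ₁ γ₂) (half_pos hε))
  obtain ⟨s, hsS, hs⟩ := exists_lt_of_csInf_lt (dgSet_nonempty γ₂ γ₃)
    (lt_add_of_pos_right (dGamma γ₂ γ₃) (half_pos hε))
  have h := csInf_le (dgSet_bddBelow γ₁ γ₃) (key r hrS s hsS)
  rw [← dGamma_eq_sInf] at h
  linarith

lemma diam_range_le_of_dGamma_le (γ γ' : Loop) {r : ℝ} (h : dGamma γ γ' ≤ r) :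
    Metric.diam (Set.range γ.toFun) ≤ Metric.diam (Set.range γ'.toFun) + 2 * r := by
  have hr0 : 0 ≤ r := (dGamma_nonneg γ γ').trans h
  apply le_of_forall_pos_le_add
  intro ε hε
  obtain ⟨s, ⟨hs0, φ, hφ, ψ, hψ, hsb⟩, hslt⟩ := exists_lt_of_csInf_lt (dgSet_nonempty γ γ')
    (lt_of_le_of_lt h (lt_add_of_pos_right r (half_pos hε)))
  have hd0 : (0 : ℝ) ≤ Metric.diam (Set.range γ'.toFun) := Metric.diam_nonneg
  apply Metric.diam_le_of_forall_dist_le (by linarith)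
  rintro x ⟨a, rfl⟩ y ⟨b, rfl⟩
  obtain ⟨u, rfl⟩ := CircleMaps.surjective hφ a
  obtain ⟨v, rfl⟩ := CircleMaps.surjective hφ b
  have hmid : dist (γ'.toFun (ψ u)) (γ'.toFun (ψ v)) ≤ Metric.diam (Set.range γ'.toFun) :=
    Metric.dist_le_diam_of_mem γ'.isBounded_range ⟨ψ u, rfl⟩ ⟨ψ v, rfl⟩
  have hv : dist (γ'.toFun (ψ v)) (γ.toFun (φ v)) ≤ s := by rw [dist_comm]; exact hsb v
  calc dist (γ.toFun (φ u)) (γ.toFun (φ v))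
      ≤ dist (γ.toFun (φ u)) (γ'.toFun (ψ u)) + dist (γ'.toFun (ψ u)) (γ'.toFun (ψ v))
        + dist (γ'.toFun (ψ v)) (γ.toFun (φ v)) := dist_triangle4 _ _ _ _
    _ ≤ s + Metric.diam (Set.range γ'.toFun) + s := add_le_add (add_le_add (hsb u) hmid) hv
    _ ≤ Metric.diam (Set.range γ'.toFun) + 2 * r + ε := by linarith

lemma range_subset_of_dGamma_zero {γ γ' : Loop} (h : dGamma γ γ' = 0) :
    Set.range γ.toFun ⊆ Set.range γ'.toFun := by
  intro x hx
  rw [← γ'.isCompact_range.isClosed.closure_eq]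
  rw [Metric.mem_closure_iff]
  intro ε hε
  obtain ⟨s, ⟨hs0, φ, hφ, ψ, hψ, hsb⟩, hslt⟩ := exists_lt_of_csInf_lt (dgSet_nonempty γ γ')
    (show sInf (dgSet γ γ') < ε by rw [← dGamma_eq_sInf, h]; exact hε)
  obtain ⟨a, rfl⟩ := hx
  obtain ⟨u, rfl⟩ := CircleMaps.surjective hφ a
  exact ⟨γ'.toFun (ψ u), ⟨ψ u, rfl⟩, lt_of_le_of_lt (hsb u) hslt⟩

lemma range_eq_of_dGamma_zero {γ γ' : Loop} (h : dGamma γ γ' = 0) :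
    Set.range γ.toFun = Set.range γ'.toFun :=
  (range_subset_of_dGamma_zero h).antisymm
    (range_subset_of_dGamma_zero (by rwa [dGamma_comm]))

lemma loopRel_equivalence : Equivalence loopRel :=
  ⟨fun γ => dGamma_self γ,
   fun {γ γ'} h => by rwa [loopRel, dGamma_comm],
   fun {γ₁ γ₂ γ₃} h1 h2 => le_antisymm
     (by have := dGamma_triangle γ₁ γ₂ γ₃; rw [loopRel] at *; linarith)
     (dGamma_nonneg _ _)⟩

lemma cls_eq_iff {γ γ' : Loop} : γ.cls = γ'.cls ↔ loopRel γ γ' :=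
  Quot.eq.trans loopRel_equivalence.eqvGen_iff

lemma LoopClass.image_cls (γ : Loop) : (γ.cls).image = Set.range γ.toFun := by
  apply Set.Subset.antisymm
  · apply Set.iUnion₂_subset
    intro γ' hγ'
    have h : loopRel γ' γ := cls_eq_iff.mp hγ'
    rw [range_eq_of_dGamma_zero h]
  · exact Set.subset_biUnion_of_mem (u := fun γ' => Set.range γ'.toFun)
      (show γ ∈ {γ' : Loop | γ'.cls = γ.cls} from rfl)

lemma LoopClass.diam_cls (γ : Loop) : (γ.cls).diam = Metric.diam (Set.range γ.toFun) := by
  rw [LoopClass.diam, LoopClass.image_cls]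

lemma LoopClass.diam_nonneg' (c : LoopClass) : 0 ≤ c.diam := Metric.diam_nonneg

lemma LoopClass.dist_cls (γ γ' : Loop) : LoopClass.dist γ.cls γ'.cls = dGamma γ γ' := by
  have hset : {r : ℝ | ∃ δ δ' : Loop, δ.cls = γ.cls ∧ δ'.cls = γ'.cls ∧ dGamma δ δ' ≤ r}
      = Set.Ici (dGamma γ γ') := by
    ext r
    constructor
    · rintro ⟨δ, δ', h1, h2, h3⟩
      have e1 : dGamma γ δ = 0 := by
        rw [dGamma_comm]; exact cls_eq_iff.mp h1
      have e2 : dGamma δ' γ' = 0 := cls_eq_iff.mp h2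
      have t1 := dGamma_triangle γ δ γ'
      have t2 := dGamma_triangle δ δ' γ'
      simp only [Set.mem_Ici]
      linarith
    · intro hr
      exact ⟨γ, γ', rfl, rfl, hr⟩
  rw [LoopClass.dist, hset, csInf_Ici]

lemma exists_rep (c : LoopClass) : ∃ γ : Loop, γ.cls = c := Quot.exists_rep c

lemma LoopClass.dist_nonneg' (c c' : LoopClass) : 0 ≤ LoopClass.dist c c' := by
  obtain ⟨γ, rfl⟩ := exists_rep c
  obtain ⟨γ', rfl⟩ := exists_rep c'
  rw [LoopClass.dist_cls]
  exact dGamma_nonneg _ _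

lemma LoopClass.dist_comm' (c c' : LoopClass) :
    LoopClass.dist c c' = LoopClass.dist c' c := by
  obtain ⟨γ, rfl⟩ := exists_rep c
  obtain ⟨γ', rfl⟩ := exists_rep c'
  rw [LoopClass.dist_cls, LoopClass.dist_cls, dGamma_comm]

lemma LoopClass.dist_triangle' (c₁ c₂ c₃ : LoopClass) :
    LoopClass.dist c₁ c₃ ≤ LoopClass.dist c₁ c₂ + LoopClass.dist c₂ c₃ := by
  obtain ⟨γ₁, rfl⟩ := exists_rep c₁
  obtain ⟨γ₂, rfl⟩ := exists_rep c₂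
  obtain ⟨γ₃, rfl⟩ := exists_rep c₃
  rw [LoopClass.dist_cls, LoopClass.dist_cls, LoopClass.dist_cls]
  exact dGamma_triangle _ _ _

lemma LoopClass.eq_of_dist_eq_zero' {c c' : LoopClass}
    (h : LoopClass.dist c c' = 0) : c = c' := by
  obtain ⟨γ, rfl⟩ := exists_rep c
  obtain ⟨γ', rfl⟩ := exists_rep c'
  rw [LoopClass.dist_cls] at h
  exact cls_eq_iff.mpr h

lemma LoopClass.diam_le_diam_add (c c' : LoopClass) :
    c.diam ≤ c'.diam + 2 * LoopClass.dist c c' := by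
  obtain ⟨γ, rfl⟩ := exists_rep c
  obtain ⟨γ', rfl⟩ := exists_rep c'
  rw [LoopClass.dist_cls, LoopClass.diam_cls, LoopClass.diam_cls]
  exact diam_range_le_of_dGamma_le γ γ' le_rfl

lemma LoopClass.diam_pos {c : LoopClass} (h : ¬ c.IsTrivial) : 0 < c.diam := by
  obtain ⟨γ, rfl⟩ := exists_rep c
  rcases lt_or_ge 0 ((γ.cls).diam) with hlt | hle
  · exact hlt
  · exfalso
    apply h
    refine ⟨γ.toFun 0, ?_⟩
    rw [LoopClass.image_cls]
    rw [Set.eq_singleton_iff_unique_mem]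
    refine ⟨⟨0, rfl⟩, fun x hx => ?_⟩
    have hd : Dist.dist x (γ.toFun 0) ≤ Metric.diam (Set.range γ.toFun) :=
      Metric.dist_le_diam_of_mem γ.isBounded_range hx ⟨0, rfl⟩
    rw [LoopClass.diam_cls] at hle
    have h0 : Dist.dist x (γ.toFun 0) = 0 := le_antisymm (hd.trans hle) dist_nonneg
    exact dist_eq_zero.mp h0

/-! ### The set defining `dX` -/

def dxSet (F G : Set LoopClass) : Set ℝ :=
  {r : ℝ | 0 ≤ r ∧ ∃ π : Set (LoopClass × LoopClass), IsMatching F G π ∧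
    (∀ p ∈ π, LoopClass.dist p.1 p.2 ≤ r) ∧
    ∀ c ∈ unmatched F G π, c.diam / 2 ≤ r}

lemma dX_eq_sInf (F G : Set LoopClass) : dX F G = sInf (dxSet F G) := rfl

lemma dxSet_bddBelow (F G : Set LoopClass) : BddBelow (dxSet F G) :=
  ⟨0, fun _ hx => hx.1⟩

lemma diam_le_diam_K {K : Set ℂ} (hK : IsCompact K) {F : Set LoopClass}
    (hF : F ∈ LoopCollections K) {c : LoopClass} (hc : c ∈ F) :
    c.diam ≤ Metric.diam K :=
  Metric.diam_mono (hF.2.1 c hc).2 hK.isBounded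

lemma dxSet_nonempty {K : Set ℂ} (hK : IsCompact K) {F G : Set LoopClass}
    (hF : F ∈ LoopCollections K) (hG : G ∈ LoopCollections K) :
    (dxSet F G).Nonempty := by
  refine ⟨Metric.diam K, Metric.diam_nonneg, ∅, ⟨?_, ?_, ?_⟩, ?_, ?_⟩
  · intro p hp; exact absurd hp (Set.notMem_empty p)
  · intro p hp; exact absurd hp (Set.notMem_empty p)
  · intro p hp; exact absurd hp (Set.notMem_empty p)
  · intro p hp; exact absurd hp (Set.notMem_empty p)
  · intro c hc
    have hdK : c.diam ≤ Metric.diam K := by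
      rcases hc with ⟨hcF, -⟩ | ⟨hcG, -⟩
      · exact diam_le_diam_K hK hF hcF
      · exact diam_le_diam_K hK hG hcG
    have h0 : 0 ≤ c.diam := c.diam_nonneg'
    linarith

lemma dX_nonneg (F G : Set LoopClass) : 0 ≤ dX F G :=
  Real.sInf_nonneg fun _ hx => hx.1

lemma unmatched_swap (F G : Set LoopClass) (π : Set (LoopClass × LoopClass)) :
    unmatched G F (Prod.swap '' π) = unmatched F G π := by
  unfold unmatched
  rw [Set.union_comm]
  congr 1
  · ext c
    simp only [Set.mem_setOf_eq, Set.forall_mem_image, Prod.fst_swap, Prod.snd_swap]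
  · ext c
    simp only [Set.mem_setOf_eq, Set.forall_mem_image, Prod.fst_swap, Prod.snd_swap]

lemma dxSet_comm (F G : Set LoopClass) : dxSet F G = dxSet G F := by
  have key : ∀ F G : Set LoopClass, dxSet F G ⊆ dxSet G F := by
    rintro F G r ⟨h0, π, ⟨hmem, h1, h2⟩, hd, hu⟩
    refine ⟨h0, Prod.swap '' π, ⟨?_, ?_, ?_⟩, ?_, ?_⟩
    · rintro p ⟨q, hq, rfl⟩
      exact ⟨(hmem q hq).2, (hmem q hq).1⟩
    · rintro p ⟨q, hq, rfl⟩ p' ⟨q', hq', rfl⟩ heq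
      rw [h2 q hq q' hq' heq]
    · rintro p ⟨q, hq, rfl⟩ p' ⟨q', hq', rfl⟩ heq
      rw [h1 q hq q' hq' heq]
    · rintro p ⟨q, hq, rfl⟩
      rw [Prod.fst_swap, Prod.snd_swap, LoopClass.dist_comm']
      exact hd q hq
    · rw [unmatched_swap]
      exact hu
  exact (key F G).antisymm (key G F)

lemma dX_comm (F G : Set LoopClass) : dX F G = dX G F := by
  rw [dX_eq_sInf, dX_eq_sInf, dxSet_comm]

lemma dxSet_add {F G H : Set LoopClass} {r₁ r₂ : ℝ}
    (h1 : r₁ ∈ dxSet F G) (h2 : r₂ ∈ dxSet G H) : r₁ + r₂ ∈ dxSet F H := by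
  obtain ⟨hr₁0, π₁, ⟨hmem₁, ha₁, hb₁⟩, hd₁, hu₁⟩ := h1
  obtain ⟨hr₂0, π₂, ⟨hmem₂, ha₂, hb₂⟩, hd₂, hu₂⟩ := h2
  refine ⟨by linarith,
    {p : LoopClass × LoopClass | ∃ b, (p.1, b) ∈ π₁ ∧ (b, p.2) ∈ π₂}, ⟨?_, ?_, ?_⟩, ?_, ?_⟩
  · rintro p ⟨b, hpb, hbp⟩
    exact ⟨(hmem₁ _ hpb).1, (hmem₂ _ hbp).2⟩
  · rintro p ⟨b, hpb, hbp⟩ q ⟨b', hqb, hbq⟩ heq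
    have hb : b = b' := by
      have h := ha₁ (p.1, b) hpb (q.1, b') hqb (by simpa using heq)
      exact (Prod.ext_iff.mp h).2
    subst hb
    have h := ha₂ (b, p.2) hbp (b, q.2) hbq rfl
    have h2' : p.2 = q.2 := (Prod.ext_iff.mp h).2
    exact Prod.ext heq h2'
  · rintro p ⟨b, hpb, hbp⟩ q ⟨b', hqb, hbq⟩ heq
    have hb : b = b' := by
      have h := hb₂ (b, p.2) hbp (b', q.2) hbq (by simpa using heq)
      exact (Prod.ext_iff.mp h).1
    subst hb
    have h := hb₁ (p.1, b) hpb (q.1, b) hqb rfl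
    have h1' : p.1 = q.1 := (Prod.ext_iff.mp h).1
    exact Prod.ext h1' heq
  · rintro p ⟨b, hpb, hbp⟩
    calc LoopClass.dist p.1 p.2 ≤ LoopClass.dist p.1 b + LoopClass.dist b p.2 :=
          LoopClass.dist_triangle' _ _ _
      _ ≤ r₁ + r₂ := add_le_add (hd₁ _ hpb) (hd₂ _ hbp)
  · rintro c (⟨hcF, hno⟩ | ⟨hcH, hno⟩)
    · by_cases hb : ∃ b, (c, b) ∈ π₁
      · obtain ⟨b, hcb⟩ := hb
        have hbun : b ∈ unmatched G H π₂ := by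
          refine Or.inl ⟨(hmem₁ _ hcb).2, fun q hq hq1 => ?_⟩
          exact hno (c, q.2) ⟨b, hcb, by rw [← hq1]; simpa using hq⟩ rfl
        have hdiamb := hu₂ b hbun
        have hdcb : LoopClass.dist c b ≤ r₁ := hd₁ _ hcb
        have := LoopClass.diam_le_diam_add c b
        linarith
      · push_neg at hb
        have hcun : c ∈ unmatched F G π₁ :=
          Or.inl ⟨hcF, fun p hp hp1 => hb p.2 (by rw [← hp1]; exact hp)⟩
        have := hu₁ c hcun
        linarith
    · by_cases hb : ∃ b, (b, c) ∈ π₂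
      · obtain ⟨b, hbc⟩ := hb
        have hbun : b ∈ unmatched F G π₁ := by
          refine Or.inr ⟨(hmem₂ _ hbc).1, fun q hq hq2 => ?_⟩
          exact hno (q.1, c) ⟨b, by rw [← hq2]; simpa using hq, hbc⟩ rfl
        have hdiamb := hu₁ b hbun
        have hdcb : LoopClass.dist c b ≤ r₂ := by
          rw [LoopClass.dist_comm']; exact hd₂ _ hbc
        have := LoopClass.diam_le_diam_add c b
        linarith
      · push_neg at hb
        have hcun : c ∈ unmatched G H π₂ :=
          Or.inr ⟨hcH, fun p hp hp2 => hb p.1 (by rw [← hp2]; exact hp)⟩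
        have := hu₂ c hcun
        linarith

lemma dX_triangle {K : Set ℂ} (hK : IsCompact K) {F G H : Set LoopClass}
    (hF : F ∈ LoopCollections K) (hG : G ∈ LoopCollections K)
    (hH : H ∈ LoopCollections K) : dX F H ≤ dX F G + dX G H := by
  apply le_of_forall_pos_le_add
  intro ε hε
  obtain ⟨r₁, hr₁S, hr₁⟩ := exists_lt_of_csInf_lt (dxSet_nonempty hK hF hG)
    (lt_add_of_pos_right (dX F G) (half_pos hε))
  obtain ⟨r₂, hr₂S, hr₂⟩ := exists_lt_of_csInf_lt (dxSet_nonempty hK hG hH)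
    (lt_add_of_pos_right (dX G H) (half_pos hε))
  have h := csInf_le (dxSet_bddBelow F H) (dxSet_add hr₁S hr₂S)
  rw [← dX_eq_sInf] at h
  linarith

lemma dX_subset_of_eq_zero {K : Set ℂ} (hK : IsCompact K) {F G : Set LoopClass}
    (hF : F ∈ LoopCollections K) (hG : G ∈ LoopCollections K)
    (h : dX F G = 0) : F ⊆ G := by
  intro c hc
  have hδ : 0 < c.diam := LoopClass.diam_pos (hF.2.1 c hc).1
  have hTfin : {g ∈ G | c.diam / 2 < g.diam}.Finite := hG.2.2 _ (by linarith)
  have key : ∀ ε : ℝ, 0 < ε →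
      ∃ g, (g ∈ G ∧ c.diam / 2 < g.diam) ∧ LoopClass.dist c g < ε := by
    intro ε hε
    set ε' := min ε (c.diam / 8) with hε'def
    have hε'pos : 0 < ε' := lt_min hε (by linarith)
    have hε'le : ε' ≤ c.diam / 8 := min_le_right _ _
    have hε'le' : ε' ≤ ε := min_le_left _ _
    obtain ⟨r, ⟨hr0, π, hπ, hd, hu⟩, hrlt⟩ := exists_lt_of_csInf_lt
      (dxSet_nonempty hK hF hG) (show sInf (dxSet F G) < ε' by rw [← dX_eq_sInf, h]; exact hε'pos)
    have hcm : ∃ p ∈ π, p.1 = c := by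
      by_contra hno
      push_neg at hno
      have hcun : c ∈ unmatched F G π := Or.inl ⟨hc, hno⟩
      have := hu c hcun
      linarith
    obtain ⟨p, hp, hp1⟩ := hcm
    have hd1 : LoopClass.dist c p.2 ≤ r := by rw [← hp1]; exact hd p hp
    have hdiam := LoopClass.diam_le_diam_add c p.2
    refine ⟨p.2, ⟨(hπ.1 p hp).2, by linarith⟩, by linarith⟩
  have hex : ∃ g, (g ∈ G ∧ c.diam / 2 < g.diam) ∧ LoopClass.dist c g = 0 := by
    by_contra hno
    push_neg at hno
    obtain ⟨g₀, hg₀, _⟩ := key 1 one_pos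
    have hTne : hTfin.toFinset.Nonempty := ⟨g₀, hTfin.mem_toFinset.mpr hg₀⟩
    set m := hTfin.toFinset.inf' hTne (fun g => LoopClass.dist c g) with hm
    have hm0 : 0 < m := by
      rw [hm, Finset.lt_inf'_iff]
      intro g hg
      exact (LoopClass.dist_nonneg' c g).lt_of_ne
        (Ne.symm (hno g (hTfin.mem_toFinset.mp hg)))
    obtain ⟨g, hgT, hglt⟩ := key m hm0
    exact absurd (Finset.inf'_le _ (hTfin.mem_toFinset.mpr hgT)) (not_le.mpr hglt)
  obtain ⟨g, hgT, hg0⟩ := hex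
  have : c = g := LoopClass.eq_of_dist_eq_zero' hg0
  rw [this]
  exact hgT.1

end Aux

/-- For every compact `K ⊂ ℂ`, `d_X` is a metric on `X(K)`. -/
theorem dX_is_metric (K : Set ℂ) (hK : IsCompact K) :
    (∀ F ∈ LoopCollections K, ∀ G ∈ LoopCollections K, 0 ≤ dX F G) ∧
    (∀ F ∈ LoopCollections K, ∀ G ∈ LoopCollections K, dX F G = dX G F) ∧
    (∀ F ∈ LoopCollections K, ∀ G ∈ LoopCollections K, ∀ H ∈ LoopCollections K,
      dX F H ≤ dX F G + dX G H) ∧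
    (∀ F ∈ LoopCollections K, ∀ G ∈ LoopCollections K, dX F G = 0 → F = G) := by
  refine ⟨fun F _ G _ => dX_nonneg F G, fun F _ G _ => dX_comm F G,
    fun F hF G hG H hH => dX_triangle hK hF hG hH, fun F hF G hG h => ?_⟩
  exact (dX_subset_of_eq_zero hK hF hG h).antisymm
    (dX_subset_of_eq_zero hK hG hF (by rwa [dX_comm]))
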